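/- arXiv:1004.1738 — 2 statements merged into one kernel-verified Lean document; each statement's English description precedes it below -/
import Mathlib

section
/- A formal series S ∈ K⟨⟨A⟩⟩ over a commutative ring K is recognizable if and only if there exists a finitely generated left K-submodule M of K⟨⟨A⟩⟩ containing S that is stable, i.e. x^{-1}(M) ⊆ M for all words x ∈ A*. -/
/-- A formal series S : A* → K is recognizable if there exist n ≥ 1, a monoid
homomorphism μ : A* → K^{n×n} and vectors λ, γ ∈ Kⁿ with
(S,x) = λᵀ μ(x) γ for all words x. -/
def Recognizable {A K : Type*} [Semiring K] (S : List A → K) : Prop :=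
  ∃ n : ℕ, 0 < n ∧ ∃ μ : List A → Matrix (Fin n) (Fin n) K,
    μ [] = 1 ∧ (∀ x y : List A, μ (x ++ y) = μ x * μ y) ∧
    ∃ l g : Fin n → K,
      ∀ x : List A, S x = dotProduct l ((μ x).mulVec g)

/-- The left-quotient-by-`x` operator as a linear map. -/
def quotMap {A K : Type*} [CommRing K] (x : List A) :
    (List A → K) →ₗ[K] (List A → K) where
  toFun T := fun y => T (x ++ y)
  map_add' T U := rfl
  map_smul' c T := rfl

/-- A formal series S is recognizable iff it lies in some finitely generated
stable left K-submodule of K⟨⟨A⟩⟩, where stable means closed under all left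
quotients x⁻¹T = (y ↦ T(x*y)). -/
theorem recognizable_iff_stable_fg_submodule {A K : Type*} [CommRing K]
    (S : List A → K) :
    Recognizable S ↔
      ∃ M : Submodule K (List A → K), M.FG ∧ S ∈ M ∧
        ∀ x : List A, ∀ T ∈ M, (fun y => T (x ++ y)) ∈ M := by
  constructor
  · rintro ⟨n, hn, μ, h1, hmul, l, g, hS⟩
    set f : Fin n → (List A → K) := fun i y => ((μ y).mulVec g) i with hf
    refine ⟨Submodule.span K (Set.range f), Submodule.fg_span (Set.finite_range f), ?_, ?_⟩
    · have hSsum : S = ∑ i, l i • f i := by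
        funext x
        simp [hS, dotProduct, hf, Finset.sum_apply]
      rw [hSsum]
      exact Submodule.sum_mem _ fun i _ =>
        Submodule.smul_mem _ _ (Submodule.subset_span ⟨i, rfl⟩)
    · intro x T hT
      have key : Submodule.span K (Set.range f) ≤
          (Submodule.span K (Set.range f)).comap (quotMap (K := K) x) := by
        rw [Submodule.span_le]
        rintro _ ⟨i, rfl⟩
        have hfx : quotMap (K := K) x (f i) = ∑ j, (μ x) i j • f j := by
          funext y
          simp only [quotMap, LinearMap.coe_mk, AddHom.coe_mk, hf, hmul,
            Matrix.mulVec, dotProduct, Matrix.mul_apply,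
            Finset.sum_apply, Pi.smul_apply, smul_eq_mul]
          simp only [Finset.sum_mul, Finset.mul_sum, mul_assoc]
          exact Finset.sum_comm
        rw [SetLike.mem_coe, Submodule.mem_comap, hfx]
        exact Submodule.sum_mem _ fun j _ =>
          Submodule.smul_mem _ _ (Submodule.subset_span ⟨j, rfl⟩)
      exact key hT
  · rintro ⟨M, hFG, hSM, hstab⟩
    obtain ⟨n0, s, hspan0⟩ := Submodule.fg_iff_exists_fin_generating_family.mp hFG
    set f : Fin (n0 + 1) → (List A → K) := Fin.cons 0 s with hfdef
    have hspan : Submodule.span K (Set.range f) = M := by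
      rw [hfdef, Fin.range_cons, Submodule.span_insert_zero, hspan0]
    have hmemf : ∀ i, f i ∈ M := fun i => by
      rw [← hspan]; exact Submodule.subset_span ⟨i, rfl⟩
    -- coefficients for letter quotients
    have hquot : ∀ (a : A) (i : Fin (n0 + 1)), ∃ c : Fin (n0 + 1) → K,
        (∑ j, c j • f j) = fun y => f i (a :: y) := by
      intro a i
      have h : (fun y => f i ([a] ++ y)) ∈ Submodule.span K (Set.range f) := by
        rw [hspan]; exact hstab [a] (f i) (hmemf i)
      simpa using (Submodule.mem_span_range_iff_exists_fun K).mp h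
    choose m hm using fun a i => hquot a i
    -- transition matrices and μ
    set mMat : A → Matrix (Fin (n0 + 1)) (Fin (n0 + 1)) K :=
      fun a => Matrix.of (fun i j => m a i j) with hmMat
    set μ : List A → Matrix (Fin (n0 + 1)) (Fin (n0 + 1)) K :=
      fun x => ((x.map mMat).prod) with hμ
    have hμnil : μ [] = 1 := by simp [hμ]
    have hμmul : ∀ x y : List A, μ (x ++ y) = μ x * μ y := by
      intro x y; simp [hμ]
    have hμcons : ∀ (a : A) (x : List A), μ (a :: x) = mMat a * μ x := by
      intro a x; simp [hμ]
    -- key: f i (x ++ y) = ∑ j, μ x i j * f j y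
    have key : ∀ (x : List A) (i : Fin (n0 + 1)) (y : List A),
        f i (x ++ y) = ∑ j, (μ x) i j * f j y := by
      intro x
      induction x with
      | nil => intro i y; simp [hμnil, Matrix.one_apply]
      | cons a x ih =>
        intro i y
        have hstep : f i (a :: (x ++ y)) = ∑ j, m a i j * f j (x ++ y) := by
          have := congrFun (hm a i) (x ++ y)
          simpa [Finset.sum_apply] using this.symm
        rw [List.cons_append, hstep]
        simp only [ih]
        rw [hμcons]
        simp only [Matrix.mul_apply, Finset.mul_sum, Finset.sum_mul, hmMat,
          Matrix.of_apply, mul_assoc]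
        exact Finset.sum_comm
    -- express S
    have hSspan : S ∈ Submodule.span K (Set.range f) := by rw [hspan]; exact hSM
    obtain ⟨l, hl⟩ := (Submodule.mem_span_range_iff_exists_fun K).mp hSspan
    refine ⟨n0 + 1, Nat.succ_pos _, μ, hμnil, hμmul, l, fun j => f j [], fun x => ?_⟩
    have hSx : S x = ∑ i, l i * f i x := by
      rw [← hl]; simp [Finset.sum_apply]
    rw [hSx]
    have : ∀ i, f i x = ∑ j, (μ x) i j * f j [] := by
      intro i; simpa using key x i []
    simp only [this, dotProduct, Matrix.mulVec]
end

section
/- Let (Y_n)_{n≥1} be a subadditive sequence of integrable random variables on an ergodic measure-preserving system (Ω, F, ℙ, θ), i.e. Y_{m+n} ≤ Y_m ∘ θ^n + Y_n a.s. for all m, n, and suppose inf_n (1/n)𝔼[Y_n] > -∞. Then Y_n/n converges almost surely to the constant β = inf_n (1/n)𝔼[Y_n]. -/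
open Filter MeasureTheory

set_option linter.unusedSectionVars false

section KingmanAuxiliary

open Set


open Filter MeasureTheory Set

namespace KingmanAux

variable {Ω : Type*} [MeasurableSpace Ω] {μ : Measure Ω} {T : Ω → Ω}

lemma integral_comp_iterate (hT : MeasurePreserving T μ μ) {g : Ω → ℝ}
    (hg : AEStronglyMeasurable g μ) (k : ℕ) :
    ∫ ω, g (T^[k] ω) ∂μ = ∫ ω, g ω ∂μ := by
  have h : MeasurePreserving (T^[k]) μ μ := hT.iterate k
  rw [← MeasureTheory.integral_map h.measurable.aemeasurable (by rwa [h.map_eq]), h.map_eq]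

lemma integrable_comp_iterate (hT : MeasurePreserving T μ μ) {g : Ω → ℝ}
    (hg : Integrable g μ) (k : ℕ) : Integrable (fun ω => g (T^[k] ω)) μ :=
  ((hT.iterate k).integrable_comp hg.aestronglyMeasurable).2 hg

lemma ae_forall_iterate (hT : MeasurePreserving T μ μ) {p : Ω → Prop}
    (hp : ∀ᵐ ω ∂μ, p ω) : ∀ᵐ ω ∂μ, ∀ k, p (T^[k] ω) := by
  rw [ae_all_iff]
  exact fun k => ((hT.iterate k).quasiMeasurePreserving.tendsto_ae).eventually hp

end KingmanAux


open Filter MeasureTheory Set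

namespace KingmanAux2

variable {Ω : Type*} [MeasurableSpace Ω] {μ : Measure Ω} {T : Ω → Ω}

/-- Borel–Cantelli: for integrable nonneg `g`, a.e. `g(T^j ω)/j → 0`. -/
lemma ae_tendsto_comp_iterate_div [IsProbabilityMeasure μ] (hT : MeasurePreserving T μ μ)
    {g : Ω → ℝ} (hgm : Measurable g) (hg : Integrable g μ) (hg0 : ∀ ω, 0 ≤ g ω) :
    ∀ᵐ ω ∂μ, Tendsto (fun j : ℕ => g (T^[j] ω) / j) atTop (nhds 0) := by
  have key : ∀ k : ℕ, ∀ᵐ ω ∂μ, ∀ᶠ j in atTop, g (T^[j] ω) ≤ j * (1 / (k + 1)) := by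
    intro k
    set ε : ℝ := 1 / (k + 1) with hε
    have hεpos : 0 < ε := by positivity
    letI : MeasureSpace Ω := ⟨μ⟩
    have htsum : (∑' j : ℕ, μ {ω | (j : ℝ) * ε < g ω}) ≠ ⊤ := by
      have h2 : (∑' j : ℕ, μ {ω | g ω / ε ∈ Set.Ioi (j : ℝ)}) < ⊤ :=
        ProbabilityTheory.tsum_prob_mem_Ioi_lt_top (X := fun ω => g ω / ε)
          (hg.div_const ε) (fun ω => div_nonneg (hg0 ω) hεpos.le)
      have : ∀ j : ℕ, {ω | (j : ℝ) * ε < g ω} = {ω | g ω / ε ∈ Set.Ioi (j : ℝ)} := by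
        intro j; ext ω'
        simp only [Set.mem_setOf_eq, Set.mem_Ioi, lt_div_iff₀ hεpos]
      simp only [this]
      exact h2.ne
    have hnull : μ {ω | ∃ᶠ j : ℕ in atTop, (j : ℝ) * ε < g (T^[j] ω)} = 0 := by
      refine measure_setOf_frequently_eq_zero ?_
      have : ∀ j : ℕ, {ω | (j : ℝ) * ε < g (T^[j] ω)} = T^[j] ⁻¹' {ω | (j : ℝ) * ε < g ω} := by
        intro j; rfl
      calc (∑' j : ℕ, μ {ω | (j : ℝ) * ε < g (T^[j] ω)})
          = ∑' j : ℕ, μ {ω | (j : ℝ) * ε < g ω} := by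
            refine tsum_congr fun j => ?_
            rw [this j, (hT.iterate j).measure_preimage
              (measurableSet_lt measurable_const hgm).nullMeasurableSet]
        _ ≠ ⊤ := htsum
    rw [← compl_mem_ae_iff] at hnull
    filter_upwards [hnull] with ω hω
    simp only [Set.mem_compl_iff, Set.mem_setOf_eq, not_frequently, not_lt] at hω
    filter_upwards [hω] with j hj using by linarith [hj]
  rw [← ae_all_iff] at key
  filter_upwards [key] with ω hω
  rw [Metric.tendsto_atTop]
  intro δ hδ
  obtain ⟨k, hk⟩ := exists_nat_one_div_lt hδ
  obtain ⟨N, hN⟩ := (hω k).exists_forall_of_atTop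
  refine ⟨max N 1, fun n hn => ?_⟩
  have hn1 : 1 ≤ n := le_trans (le_max_right _ _) hn
  have hnN : N ≤ n := le_trans (le_max_left _ _) hn
  have h1 := hN n hnN
  have hnpos : (0 : ℝ) < n := by exact_mod_cast hn1
  rw [Real.dist_eq, sub_zero, abs_of_nonneg (div_nonneg (hg0 _) hnpos.le)]
  calc g (T^[n] ω) / n ≤ (n * (1 / (k + 1))) / n :=
        div_le_div_of_nonneg_right h1 hnpos.le |>.trans_eq rfl
    _ = 1 / (k + 1) := by
        rw [mul_comm, mul_div_assoc, div_self hnpos.ne', mul_one]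
    _ < δ := hk

/-- Window sums of a sequence with `b j / j → 0` are `o(n)`. -/
lemma window_sum {b : ℕ → ℝ} (hb0 : ∀ j, 0 ≤ b j)
    (h : Tendsto (fun j : ℕ => b j / j) atTop (nhds 0)) (K : ℕ) {ε : ℝ} (hε : 0 < ε) :
    ∀ᶠ n in atTop, (∑ j ∈ Finset.Ioc (n - K) n, b j) ≤ ε * n := by
  have hδ : (0:ℝ) < ε / (K + 1) := by positivity
  have := (Metric.tendsto_atTop.1 h) (ε / (K + 1)) hδ
  obtain ⟨N, hN⟩ := this
  filter_upwards [eventually_ge_atTop (N + K + 1)] with n hn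
  have hcard : (Finset.Ioc (n - K) n).card ≤ K := by
    rw [Nat.card_Ioc]; omega
  have hterm : ∀ j ∈ Finset.Ioc (n - K) n, b j ≤ (ε / (K + 1)) * n := by
    intro j hj
    simp only [Finset.mem_Ioc] at hj
    have hjN : N ≤ j := by omega
    have hj1 : 1 ≤ j := by omega
    have hjpos : (0:ℝ) < j := by exact_mod_cast hj1
    have := hN j hjN
    rw [Real.dist_eq, sub_zero, abs_of_nonneg (div_nonneg (hb0 j) (by positivity))] at this
    have hbj : b j ≤ (ε / (K + 1)) * j := by
      rw [div_lt_iff₀ hjpos] at this; linarith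
    refine hbj.trans ?_
    have : (j : ℝ) ≤ n := by exact_mod_cast hj.2
    nlinarith
  calc (∑ j ∈ Finset.Ioc (n - K) n, b j) ≤ (Finset.Ioc (n - K) n).card • ((ε / (K + 1)) * n) :=
        Finset.sum_le_card_nsmul _ _ _ hterm
    _ = (Finset.Ioc (n - K) n).card * ((ε / (K + 1)) * n) := by rw [nsmul_eq_mul]
    _ ≤ K * ((ε / (K + 1)) * n) := by
        apply mul_le_mul_of_nonneg_right _ (by positivity)
        exact_mod_cast hcard
    _ ≤ ε * n := by
        have hn0 : (0:ℝ) ≤ n := Nat.cast_nonneg n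
        have hK : (K : ℝ) / (K + 1) ≤ 1 := by
          rw [div_le_one (by positivity)]; linarith
        calc (K:ℝ) * ((ε / (K + 1)) * n) = ((K:ℝ)/(K+1)) * (ε * n) := by ring
          _ ≤ 1 * (ε * n) := by
              apply mul_le_mul_of_nonneg_right hK (by positivity)
          _ = ε * n := one_mul _

end KingmanAux2


open Filter MeasureTheory Set

namespace KingmanAux3

set_option linter.unusedSectionVars false

variable {Ω : Type*} [MeasurableSpace Ω] {μ : Measure Ω} {T : Ω → Ω}

/-- Birkhoff sums. -/
def bS (T : Ω → Ω) (g : Ω → ℝ) (n : ℕ) (ω : Ω) : ℝ := ∑ k ∈ Finset.range n, g (T^[k] ω)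

lemma bS_zero (T : Ω → Ω) (g : Ω → ℝ) (ω : Ω) : bS T g 0 ω = 0 := by simp [bS]

lemma bS_succ' (T : Ω → Ω) (g : Ω → ℝ) (n : ℕ) (ω : Ω) :
    bS T g (n + 1) ω = g ω + bS T g n (T ω) := by
  unfold bS
  rw [Finset.sum_range_succ']
  simp only [Function.iterate_succ_apply, Function.iterate_zero_apply]
  exact add_comm _ _

lemma bS_measurable (hT : Measurable T) {g : Ω → ℝ} (hg : Measurable g) (n : ℕ) :
    Measurable (bS T g n) :=
  Finset.measurable_sum _ fun k _ => hg.comp (hT.iterate k)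

/-- Running maxima of Birkhoff sums, starting from `bS 0 = 0`. -/
def bM (T : Ω → Ω) (g : Ω → ℝ) : ℕ → Ω → ℝ
  | 0 => fun _ => 0
  | n + 1 => fun ω => max (bM T g n ω) (bS T g (n + 1) ω)

lemma bM_nonneg (T : Ω → Ω) (g : Ω → ℝ) (n : ℕ) (ω : Ω) : 0 ≤ bM T g n ω := by
  induction n with
  | zero => exact le_refl 0
  | succ n ih => exact le_trans ih (le_max_left _ _)

lemma bS_le_bM (T : Ω → Ω) (g : Ω → ℝ) {k n : ℕ} (hk : k ≤ n) (ω : Ω) :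
    bS T g k ω ≤ bM T g n ω := by
  induction n with
  | zero => simp only [Nat.le_zero] at hk; subst hk; simp [bS_zero, bM]
  | succ n ih =>
    rcases Nat.lt_or_ge k (n + 1) with h | h
    · exact le_trans (ih (Nat.lt_succ_iff.mp h)) (le_max_left _ _)
    · have : k = n + 1 := le_antisymm hk h
      subst this; exact le_max_right _ _

lemma bM_exists_eq (T : Ω → Ω) (g : Ω → ℝ) (n : ℕ) (ω : Ω) :
    ∃ k ≤ n, bM T g n ω = bS T g k ω := by
  induction n with
  | zero => exact ⟨0, le_refl 0, (bS_zero T g ω).symm⟩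
  | succ n ih =>
    obtain ⟨k, hk, hkeq⟩ := ih
    rcases max_cases (bM T g n ω) (bS T g (n + 1) ω) with ⟨h1, _⟩ | ⟨h1, _⟩
    · exact ⟨k, le_trans hk (Nat.le_succ n), by
        rw [show bM T g (n+1) ω = max (bM T g n ω) (bS T g (n+1) ω) from rfl, h1, hkeq]⟩
    · exact ⟨n + 1, le_refl _, by
        rw [show bM T g (n+1) ω = max (bM T g n ω) (bS T g (n+1) ω) from rfl, h1]⟩

lemma bM_measurable (hT : Measurable T) {g : Ω → ℝ} (hg : Measurable g) (n : ℕ) :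
    Measurable (bM T g n) := by
  induction n with
  | zero => exact measurable_const
  | succ n ih => exact ih.max (bS_measurable hT hg (n + 1))

lemma bS_integrable (hT : MeasurePreserving T μ μ) {g : Ω → ℝ} (hg : Integrable g μ) (n : ℕ) :
    Integrable (bS T g n) μ := by
  unfold bS
  exact integrable_finset_sum _ fun k _ => KingmanAux.integrable_comp_iterate hT hg k

lemma bM_integrable (hT : MeasurePreserving T μ μ) {g : Ω → ℝ} (hg : Integrable g μ) (n : ℕ) :
    Integrable (bM T g n) μ := by
  induction n with
  | zero => exact integrable_zero Ω ℝ μ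
  | succ n ih =>
    have : bM T g (n + 1) = fun ω => max (bM T g n ω) (bS T g (n + 1) ω) := rfl
    rw [this]
    exact ih.sup (bS_integrable hT hg (n + 1))

/-- Key pointwise inequality for the maximal ergodic theorem. -/
lemma bM_key (T : Ω → Ω) (g : Ω → ℝ) (n : ℕ) (ω : Ω) (h : 0 < bM T g n ω) :
    bM T g n ω ≤ g ω + bM T g n (T ω) := by
  obtain ⟨k, hkn, hkeq⟩ := bM_exists_eq T g n ω
  match k, hkn, hkeq with
  | 0, _, hkeq => rw [hkeq, bS_zero] at h; exact absurd h (lt_irrefl 0)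
  | j + 1, hkn, hkeq =>
    rw [hkeq, bS_succ']
    have : bS T g j (T ω) ≤ bM T g n (T ω) := bS_le_bM T g (le_trans (Nat.le_succ j) hkn) (T ω)
    linarith

/-- **Maximal ergodic theorem** (Garsia's proof). -/
lemma maximal_ergodic [IsProbabilityMeasure μ] (hT : MeasurePreserving T μ μ) {g : Ω → ℝ}
    (hgm : Measurable g) (hg : Integrable g μ) :
    0 ≤ ∫ ω in {ω | ∃ k, 1 ≤ k ∧ 0 < bS T g k ω}, g ω ∂μ := by
  set A : ℕ → Set Ω := fun n => {ω | 0 < bM T g n ω} with hA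
  have hAmeas : ∀ n, MeasurableSet (A n) := fun n =>
    measurableSet_lt measurable_const (bM_measurable hT.measurable hgm n)
  have hMT : ∀ n, Integrable (fun ω => bM T g n (T ω)) μ := by
    intro n
    have := KingmanAux.integrable_comp_iterate hT (bM_integrable hT hg n) 1
    simpa using this
  have hintMT : ∀ n, ∫ ω, bM T g n (T ω) ∂μ = ∫ ω, bM T g n ω ∂μ := by
    intro n
    have := KingmanAux.integral_comp_iterate hT
      (bM_integrable hT hg n).aestronglyMeasurable 1
    simpa using this
  have hstep : ∀ n, 0 ≤ ∫ ω in A n, g ω ∂μ := by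
    intro n
    have hmono : ∫ ω in A n, (bM T g n ω - bM T g n (T ω)) ∂μ ≤ ∫ ω in A n, g ω ∂μ := by
      refine setIntegral_mono_on
        (((bM_integrable hT hg n).sub (hMT n)).integrableOn) hg.integrableOn (hAmeas n) ?_
      intro ω hω
      have := bM_key T g n ω hω
      linarith
    have hsplit : ∫ ω in A n, (bM T g n ω - bM T g n (T ω)) ∂μ
        = ∫ ω in A n, bM T g n ω ∂μ - ∫ ω in A n, bM T g n (T ω) ∂μ :=
      integral_sub (bM_integrable hT hg n).integrableOn (hMT n).integrableOn
    have h1 : ∫ ω in A n, bM T g n ω ∂μ = ∫ ω, bM T g n ω ∂μ := by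
      have hcompl : ∫ ω in (A n)ᶜ, bM T g n ω ∂μ = 0 := by
        refine integral_eq_zero_of_ae ?_
        rw [EventuallyEq, ae_restrict_iff' (hAmeas n).compl]
        refine Eventually.of_forall fun ω hω => ?_
        simp only [mem_compl_iff, hA, mem_setOf_eq, not_lt] at hω
        exact le_antisymm hω (bM_nonneg T g n ω)
      have := integral_add_compl (hAmeas n) (bM_integrable hT hg n)
      rw [hcompl, add_zero] at this
      exact this
    have h2 : ∫ ω in A n, bM T g n (T ω) ∂μ ≤ ∫ ω, bM T g n (T ω) ∂μ :=
      setIntegral_le_integral (hMT n) (Eventually.of_forall fun ω => bM_nonneg T g n (T ω))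
    refine le_trans ?_ hmono
    rw [hsplit, h1]
    rw [← hintMT n] at *
    linarith
  have hmonoA : Monotone A := by
    refine monotone_nat_of_le_succ fun n ω hω => ?_
    simp only [hA, mem_setOf_eq] at hω ⊢
    exact lt_of_lt_of_le hω (le_max_left _ _)
  have hUnion : {ω | ∃ k, 1 ≤ k ∧ 0 < bS T g k ω} = ⋃ n, A n := by
    ext ω
    simp only [mem_setOf_eq, mem_iUnion, hA]
    constructor
    · rintro ⟨k, _, hk⟩
      exact ⟨k, lt_of_lt_of_le hk (bS_le_bM T g (le_refl k) ω)⟩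
    · rintro ⟨n, hn⟩
      obtain ⟨k, hkn, hkeq⟩ := bM_exists_eq T g n ω
      refine ⟨k, ?_, by rw [← hkeq]; exact hn⟩
      rcases Nat.eq_zero_or_pos k with h | h
      · subst h; rw [hkeq, bS_zero] at hn; exact absurd hn (lt_irrefl 0)
      · exact h
  have hlim : Tendsto (fun n => ∫ ω in A n, g ω ∂μ) atTop (nhds (∫ ω in ⋃ n, A n, g ω ∂μ)) :=
    tendsto_setIntegral_of_monotone hAmeas hmonoA hg.integrableOn
  rw [hUnion]
  exact ge_of_tendsto' hlim hstep
  
end KingmanAux3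


open Filter MeasureTheory Set

namespace KingmanAux3

variable {Ω : Type*} [MeasurableSpace Ω] {μ : Measure Ω} {T : Ω → Ω}

lemma bS_sub_const (T : Ω → Ω) (g : Ω → ℝ) (q : ℝ) (n : ℕ) (ω : Ω) :
    bS T (fun ω => g ω - q) n ω = bS T g n ω - n * q := by
  unfold bS
  rw [Finset.sum_sub_distrib, Finset.sum_const, Finset.card_range, nsmul_eq_mul, mul_comm]

/-- Half of Birkhoff's theorem in the ergodic case: eventual upper bound
on Birkhoff sums by any `c` greater than the mean. -/
lemma half_birkhoff [IsProbabilityMeasure μ] (hErg : Ergodic T μ) {g : Ω → ℝ}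
    (hgm : Measurable g) (hg : Integrable g μ) {c : ℝ} (hc : ∫ ω, g ω ∂μ < c) :
    ∀ᵐ ω ∂μ, ∀ᶠ n in atTop, bS T g n ω < c * n := by
  have hT : MeasurePreserving T μ μ := hErg.toMeasurePreserving
  set E : Set Ω := {ω | ∀ q : ℚ, (q : ℝ) < c → ∃ᶠ n in atTop, (q : ℝ) * n < bS T g n ω}
    with hEdef
  have hEmeas : MeasurableSet E := by
    have : E = ⋂ (q : ℚ), ⋂ (_ : (q : ℝ) < c), ⋂ (N : ℕ), ⋃ (n : ℕ), ⋃ (_ : N ≤ n),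
        {ω | (q : ℝ) * n < bS T g n ω} := by
      ext ω
      simp only [hEdef, mem_setOf_eq, mem_iInter, mem_iUnion, frequently_atTop, mem_setOf_eq]
      constructor
      · intro h q hq N; obtain ⟨n, hn, h'⟩ := h q hq N; exact ⟨n, hn, h'⟩
      · intro h q hq N; obtain ⟨n, hn, h'⟩ := h q hq N; exact ⟨n, hn, h'⟩
    rw [this]
    exact MeasurableSet.iInter fun q => MeasurableSet.iInter fun _ =>
      MeasurableSet.iInter fun N => MeasurableSet.iUnion fun n => MeasurableSet.iUnion fun _ =>
        measurableSet_lt measurable_const (bS_measurable hT.measurable hgm n)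
  have hEsub : E ⊆ T ⁻¹' E := by
    intro ω hω q hq
    obtain ⟨q', hq1, hq2⟩ := exists_rat_btwn hq
    have hq1' : (q : ℝ) < (q' : ℝ) := hq1
    have hfreq := hω q' hq2
    rw [frequently_atTop] at hfreq ⊢
    intro N
    obtain ⟨N₀, hN₀⟩ := exists_nat_ge ((g ω - q) / ((q' : ℝ) - q))
    obtain ⟨n, hn, hlt⟩ := hfreq (max (N + 1) (N₀ + 1))
    have hn1 : N + 1 ≤ n := le_trans (le_max_left _ _) hn
    have hn0 : N₀ + 1 ≤ n := le_trans (le_max_right _ _) hn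
    refine ⟨n - 1, by omega, ?_⟩
    have hrw : n = (n - 1) + 1 := by omega
    rw [hrw, bS_succ'] at hlt
    have hcast : ((n - 1 : ℕ) : ℝ) + 1 = (n : ℝ) := by
      rw [Nat.cast_sub (by omega : 1 ≤ n)]; push_cast; ring
    have hbig : (g ω - q) / ((q' : ℝ) - q) ≤ ((n - 1 : ℕ) : ℝ) := by
      refine hN₀.trans ?_
      have : (N₀ : ℝ) ≤ ((n - 1 : ℕ) : ℝ) := by exact_mod_cast (by omega : N₀ ≤ n - 1)
      exact this
    have hpos : (0 : ℝ) < (q' : ℝ) - q := by linarith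
    rw [div_le_iff₀ hpos] at hbig
    -- hlt : q' * n < g ω + bS T g (n-1) (T ω)
    have : (q : ℝ) * ((n - 1 : ℕ) : ℝ) < (q' : ℝ) * n - g ω := by
      have : (q' : ℝ) * n = (q' : ℝ) * ((n - 1 : ℕ) : ℝ) + q' := by rw [← hcast]; ring
      nlinarith [hbig]
    calc (q : ℝ) * ((n - 1 : ℕ) : ℝ) < (q' : ℝ) * n - g ω := this
      _ < bS T g (n - 1) (T ω) := by
          have h2 := hlt
          rw [← hrw] at h2
          linarith
  rcases hErg.ae_empty_or_univ_of_ae_le_preimage' hEmeas.nullMeasurableSet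
      (HasSubset.Subset.eventuallyLE hEsub) (measure_ne_top μ E) with hE | hE
  · have hnull : μ E = 0 := ae_eq_empty.mp hE
    have : ∀ᵐ ω ∂μ, ω ∉ E := (measure_eq_zero_iff_ae_notMem).mp hnull
    filter_upwards [this] with ω hω
    simp only [hEdef, mem_setOf_eq, not_forall] at hω
    obtain ⟨q, hq, hnot⟩ := hω
    rw [not_frequently] at hnot
    simp only [not_lt] at hnot
    filter_upwards [hnot, eventually_ge_atTop 1] with n h1 h2
    have hn : (0 : ℝ) < n := by exact_mod_cast h2
    calc bS T g n ω ≤ (q : ℝ) * n := h1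
      _ < c * n := by nlinarith
  · exfalso
    obtain ⟨q0, hq0g, hq0c⟩ := exists_rat_btwn hc
    set g' : Ω → ℝ := fun ω => g ω - (q0 : ℝ) with hg'def
    have key : E ⊆ {ω | ∃ k, 1 ≤ k ∧ 0 < bS T g' k ω} := by
      intro ω hω
      have := hω q0 hq0c
      rw [frequently_atTop] at this
      obtain ⟨n, hn1, hlt⟩ := this 1
      refine ⟨n, hn1, ?_⟩
      rw [hg'def, bS_sub_const]
      linarith
    have hfull : ∀ᵐ ω ∂μ, ω ∈ {ω | ∃ k, 1 ≤ k ∧ 0 < bS T g' k ω} := by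
      have hEfull : ∀ᵐ ω ∂μ, ω ∈ E := by
        filter_upwards [eventuallyEq_set.mp hE] with ω hω using hω.mpr (mem_univ ω)
      filter_upwards [hEfull] with ω hω using key hω
    have h0 := maximal_ergodic hT (g := g') (hgm.sub measurable_const)
      (hg.sub (integrable_const _))
    rw [Measure.restrict_eq_self_of_ae_mem hfull] at h0
    have : ∫ ω, g' ω ∂μ = (∫ ω, g ω ∂μ) - (q0 : ℝ) := by
      rw [hg'def]
      rw [integral_sub hg (integrable_const _), integral_const]
      simp
    rw [this] at h0
    linarith

end KingmanAux3


open Filter MeasureTheory Set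

namespace KingmanAux4

open KingmanAux3

variable {Ω : Type*} [MeasurableSpace Ω] {μ : Measure Ω} {T : Ω → Ω}

/-- Pointwise subadditivity along the whole orbit. -/
def Good (T : Ω → Ω) (f : ℕ → Ω → ℝ) (ω : Ω) : Prop :=
  ∀ k m n : ℕ, f (m + n) (T^[k] ω) ≤ f m (T^[n + k] ω) + f n (T^[k] ω)

lemma Good.shift {f : ℕ → Ω → ℝ} {ω : Ω} (h : Good T f ω) (j : ℕ) : Good T f (T^[j] ω) := by
  intro k m n
  rw [← Function.iterate_add_apply, ← Function.iterate_add_apply]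
  have := h (k + j) m n
  rwa [← add_assoc] at this

lemma Good.sub {f : ℕ → Ω → ℝ} {ω : Ω} (h : Good T f ω) (m n : ℕ) :
    f (m + n) ω ≤ f m (T^[n] ω) + f n ω := by
  have := h 0 m n
  simpa using this

lemma ae_good [IsProbabilityMeasure μ] (hT : MeasurePreserving T μ μ) {f : ℕ → Ω → ℝ}
    (hSub : ∀ m n : ℕ, ∀ᵐ ω ∂μ, f (m + n) ω ≤ f m (T^[n] ω) + f n ω) :
    ∀ᵐ ω ∂μ, Good T f ω := by
  have h1 : ∀ᵐ ω ∂μ, ∀ m n, f (m + n) ω ≤ f m (T^[n] ω) + f n ω := by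
    rw [ae_all_iff]; intro m; rw [ae_all_iff]; exact hSub m
  filter_upwards [KingmanAux.ae_forall_iterate hT h1] with ω hω k m n
  have := hω k m n
  rwa [← Function.iterate_add_apply] at this

lemma chain_ones {f : ℕ → Ω → ℝ} (T : Ω → Ω) :
    ∀ L, 1 ≤ L → ∀ ω : Ω, Good T f ω → f L ω ≤ ∑ k ∈ Finset.range L, f 1 (T^[k] ω) := by
  intro L
  induction L with
  | zero => omega
  | succ L ih =>
    intro _ ω hG
    rcases Nat.eq_zero_or_pos L with h0 | hL
    · subst h0; simp
    · have h1 : f (L + 1) ω ≤ f L (T^[1] ω) + f 1 ω := hG.sub L 1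
      have h2 := ih hL (T^[1] ω) (hG.shift 1)
      have h3 : ∑ k ∈ Finset.range L, f 1 (T^[k] (T^[1] ω))
          = ∑ k ∈ Finset.range L, f 1 (T^[k + 1] ω) := by
        refine Finset.sum_congr rfl fun k _ => ?_
        rw [← Function.iterate_add_apply]
      rw [Finset.sum_range_succ']
      simp only [Function.iterate_zero_apply]
      rw [h3] at h2
      linarith

/-- The "penalty" function in Steele's argument. -/
def wA (f : ℕ → Ω → ℝ) (c : ℝ) (x : Ω) : ℝ := max (f 1 x) 0 + |c|

open Classical in
/-- Penalty paid only outside the good covering set. -/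
noncomputable def uA (f : ℕ → Ω → ℝ) (c : ℝ) (N : ℕ) (x : Ω) : ℝ :=
  if ∃ n, 1 ≤ n ∧ n ≤ N ∧ f n x ≤ c * n then 0 else wA f c x

lemma wA_nonneg (f : ℕ → Ω → ℝ) (c : ℝ) (x : Ω) : 0 ≤ wA f c x :=
  add_nonneg (le_max_right _ _) (abs_nonneg c)

lemma uA_nonneg (f : ℕ → Ω → ℝ) (c : ℝ) (N : ℕ) (x : Ω) : 0 ≤ uA f c N x := by
  unfold uA; split
  · exact le_refl 0
  · exact wA_nonneg f c x

lemma uA_le_wA (f : ℕ → Ω → ℝ) (c : ℝ) (N : ℕ) (x : Ω) : uA f c N x ≤ wA f c x := by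
  unfold uA; split
  · exact wA_nonneg f c x
  · exact le_refl _

lemma f_one_le (f : ℕ → Ω → ℝ) (c : ℝ) (x : Ω) : f 1 x ≤ c + wA f c x := by
  unfold wA
  have h1 : f 1 x ≤ max (f 1 x) 0 := le_max_left _ _
  have h2 : 0 ≤ c + |c| := by
    rcases abs_cases c with ⟨h, _⟩ | ⟨h, _⟩ <;> linarith
  linarith

/-- The core covering estimate of Steele's proof, by strong induction. -/
lemma steele_claim (T : Ω → Ω) (f : ℕ → Ω → ℝ) (c : ℝ) (N : ℕ) (hN : 1 ≤ N) :
    ∀ L, 1 ≤ L → ∀ ω : Ω, Good T f ω →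
      f L ω ≤ c * L + (∑ k ∈ Finset.range L, uA f c N (T^[k] ω))
        + ∑ k ∈ Finset.range L, (if L ≤ k + N then wA f c (T^[k] ω) else 0) := by
  intro L
  induction L using Nat.strong_induction_on with
  | _ L IH =>
  intro hL ω hG
  have husum : (0:ℝ) ≤ ∑ k ∈ Finset.range L, uA f c N (T^[k] ω) :=
    Finset.sum_nonneg fun k _ => uA_nonneg f c N _
  have hwsum : (0:ℝ) ≤ ∑ k ∈ Finset.range L, (if L ≤ k + N then wA f c (T^[k] ω) else 0) := by
    refine Finset.sum_nonneg fun k _ => ?_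
    split
    · exact wA_nonneg f c _
    · exact le_refl 0
  by_cases hg : ∃ n, 1 ≤ n ∧ n ≤ N ∧ f n ω ≤ c * n
  · obtain ⟨φ, hφ1, hφN, hφval⟩ := hg
    by_cases hφL : φ ≤ L
    · rcases eq_or_lt_of_le hφL with heq | hlt
      · subst heq
        linarith
      · -- 1 ≤ L - φ < L
        have h1 : f L ω ≤ f (L - φ) (T^[φ] ω) + f φ ω := by
          have := hG.sub (L - φ) φ
          rwa [Nat.sub_add_cancel hφL] at this
        have h2 := IH (L - φ) (by omega) (by omega) (T^[φ] ω) (hG.shift φ)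
        simp only [← Function.iterate_add_apply] at h2
        have e1 : ∑ k ∈ Finset.range (L - φ), uA f c N (T^[k + φ] ω)
            = ∑ j ∈ Finset.Ico φ L, uA f c N (T^[j] ω) := by
          rw [Finset.sum_Ico_eq_sum_range]
          have : L - φ = L - φ := rfl
          refine Finset.sum_congr rfl fun k _ => ?_
          rw [add_comm]
        have e2 : ∑ k ∈ Finset.range (L - φ), (if L - φ ≤ k + N then wA f c (T^[k + φ] ω) else 0)
            = ∑ j ∈ Finset.Ico φ L, (if L ≤ j + N then wA f c (T^[j] ω) else 0) := by
          rw [Finset.sum_Ico_eq_sum_range]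
          refine Finset.sum_congr rfl fun k hk => ?_
          simp only [Finset.mem_range] at hk
          rw [add_comm φ k]
          exact if_congr (by omega) rfl rfl
        have s1 : ∑ j ∈ Finset.Ico φ L, uA f c N (T^[j] ω)
            ≤ ∑ k ∈ Finset.range L, uA f c N (T^[k] ω) := by
          rw [Finset.range_eq_Ico]
          exact Finset.sum_le_sum_of_subset_of_nonneg
            (Finset.Ico_subset_Ico (Nat.zero_le φ) (le_refl L))
            (fun k _ _ => uA_nonneg f c N _)
        have s2 : ∑ j ∈ Finset.Ico φ L, (if L ≤ j + N then wA f c (T^[j] ω) else 0)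
            ≤ ∑ k ∈ Finset.range L, (if L ≤ k + N then wA f c (T^[k] ω) else 0) := by
          rw [Finset.range_eq_Ico]
          refine Finset.sum_le_sum_of_subset_of_nonneg
            (Finset.Ico_subset_Ico (Nat.zero_le φ) (le_refl L)) (fun k _ _ => ?_)
          split
          · exact wA_nonneg f c _
          · exact le_refl 0
        rw [e1, e2] at h2
        have hcast : ((L - φ : ℕ) : ℝ) = (L : ℝ) - (φ : ℝ) := by
          rw [Nat.cast_sub hφL]
        rw [hcast] at h2
        linarith
    · -- L < φ ≤ N
      have hLN : L ≤ N := by omega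
      have hch := chain_ones T L hL ω hG
      have hbound : ∑ k ∈ Finset.range L, f 1 (T^[k] ω)
          ≤ ∑ k ∈ Finset.range L, (c + wA f c (T^[k] ω)) :=
        Finset.sum_le_sum fun k _ => f_one_le f c _
      have hsum : ∑ k ∈ Finset.range L, (c + wA f c (T^[k] ω))
          = c * L + ∑ k ∈ Finset.range L, wA f c (T^[k] ω) := by
        rw [Finset.sum_add_distrib, Finset.sum_const, Finset.card_range, nsmul_eq_mul, mul_comm]
      have heq : ∑ k ∈ Finset.range L, (if L ≤ k + N then wA f c (T^[k] ω) else 0)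
          = ∑ k ∈ Finset.range L, wA f c (T^[k] ω) :=
        Finset.sum_congr rfl fun k _ => if_pos (by omega)
      rw [heq]
      linarith
  · -- ω is not in the good set; peel one step
    have hu : uA f c N ω = wA f c ω := by
      unfold uA; rw [if_neg hg]
    rcases eq_or_lt_of_le hL with heq | hlt
    · -- L = 1
      subst heq
      simp only [Finset.range_one, Finset.sum_singleton, Function.iterate_zero_apply]
      have := f_one_le f c ω
      have hif : (0:ℝ) ≤ if 1 ≤ 0 + N then wA f c ω else 0 := by
        split
        · exact wA_nonneg f c _
        · exact le_refl 0
      rw [hu]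
      push_cast
      linarith
    · -- L ≥ 2
      have h1 : f L ω ≤ f (L - 1) (T^[1] ω) + f 1 ω := by
        have := hG.sub (L - 1) 1
        rwa [Nat.sub_add_cancel hL] at this
      have h2 := IH (L - 1) (by omega) (by omega) (T^[1] ω) (hG.shift 1)
      simp only [← Function.iterate_add_apply] at h2
      have e1 : ∑ k ∈ Finset.range L, uA f c N (T^[k] ω)
          = (∑ k ∈ Finset.range (L - 1), uA f c N (T^[k + 1] ω)) + uA f c N ω := by
        rw [show L = (L - 1) + 1 by omega, Finset.sum_range_succ']
        simp only [Function.iterate_zero_apply]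
        congr 1
      have e2 : ∑ k ∈ Finset.range L, (if L ≤ k + N then wA f c (T^[k] ω) else 0)
          = (∑ k ∈ Finset.range (L - 1), (if L - 1 ≤ k + N then wA f c (T^[k + 1] ω) else 0))
            + (if L ≤ N then wA f c ω else 0) := by
        rw [show L = (L - 1) + 1 by omega, Finset.sum_range_succ']
        simp only [Function.iterate_zero_apply, Nat.zero_add]
        congr 1
        refine Finset.sum_congr rfl fun k _ => if_congr (by omega) rfl rfl
      have hif : (0:ℝ) ≤ if L ≤ N then wA f c ω else 0 := by
        split
        · exact wA_nonneg f c _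
        · exact le_refl 0
      have hf1 : f 1 ω ≤ c + wA f c ω := f_one_le f c ω
      have hcast : ((L - 1 : ℕ) : ℝ) = (L : ℝ) - 1 := by
        rw [Nat.cast_sub hL]; norm_num
      rw [hcast] at h2
      rw [e1, e2]
      linarith [hu]

end KingmanAux4


open Filter MeasureTheory Set

namespace KingmanAux4

open KingmanAux3

variable {Ω : Type*} [MeasurableSpace Ω] {μ : Measure Ω} {T : Ω → Ω}

lemma wA_measurable {f : ℕ → Ω → ℝ} (hm : ∀ n, Measurable (f n)) (c : ℝ) :
    Measurable (wA f c) :=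
  (((hm 1).max measurable_const).add measurable_const)

lemma wA_integrable (hT : MeasurePreserving T μ μ) [IsProbabilityMeasure μ] {f : ℕ → Ω → ℝ}
    (hi : ∀ n, Integrable (f n) μ) (c : ℝ) : Integrable (wA f c) μ := by
  have h1 : Integrable (fun x => max (f 1 x) 0) μ := (hi 1).sup (integrable_const 0)
  exact h1.add (integrable_const _)

lemma uA_measurable {f : ℕ → Ω → ℝ} (hm : ∀ n, Measurable (f n)) (c : ℝ) (N : ℕ) :
    Measurable (uA f c N) := by
  have hG : MeasurableSet {x | ∃ n, 1 ≤ n ∧ n ≤ N ∧ f n x ≤ c * n} := by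
    have : {x | ∃ n, 1 ≤ n ∧ n ≤ N ∧ f n x ≤ c * n}
        = ⋃ n, ⋃ (_ : 1 ≤ n ∧ n ≤ N), {x | f n x ≤ c * n} := by
      ext x
      simp only [mem_setOf_eq, mem_iUnion]
      constructor
      · rintro ⟨n, h1, h2, h3⟩; exact ⟨n, ⟨h1, h2⟩, h3⟩
      · rintro ⟨n, ⟨h1, h2⟩, h3⟩; exact ⟨n, h1, h2, h3⟩
    rw [this]
    exact MeasurableSet.iUnion fun n => MeasurableSet.iUnion fun _ =>
      measurableSet_le (hm n) measurable_const
  unfold uA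
  exact Measurable.ite hG measurable_const (wA_measurable hm c)

lemma uA_integrable (hT : MeasurePreserving T μ μ) [IsProbabilityMeasure μ] {f : ℕ → Ω → ℝ}
    (hm : ∀ n, Measurable (f n)) (hi : ∀ n, Integrable (f n) μ) (c : ℝ) (N : ℕ) :
    Integrable (uA f c N) μ := by
  refine (wA_integrable hT hi c).mono' (uA_measurable hm c N).aestronglyMeasurable
    (Eventually.of_forall fun x => ?_)
  rw [Real.norm_eq_abs, abs_of_nonneg (uA_nonneg f c N x)]
  exact uA_le_wA f c N x

/-- Steele's integrated bound: if from a.e. point some average `f n / n`, `n ≥ 1`,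
dips below `c`, then any `b` with `b * L ≤ ∫ f L` for all `L ≥ 1` satisfies `b ≤ c`. -/
lemma steele_bound [IsProbabilityMeasure μ] (hT : MeasurePreserving T μ μ) {f : ℕ → Ω → ℝ}
    (hm : ∀ n, Measurable (f n)) (hi : ∀ n, Integrable (f n) μ)
    (hSub : ∀ m n : ℕ, ∀ᵐ ω ∂μ, f (m + n) ω ≤ f m (T^[n] ω) + f n ω)
    {c b : ℝ} (hcov : ∀ᵐ ω ∂μ, ∃ n, 1 ≤ n ∧ f n ω ≤ c * n)
    (hb : ∀ L : ℕ, 1 ≤ L → b * L ≤ ∫ ω, f L ω ∂μ) : b ≤ c := by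
  have hw0 : ∀ x, 0 ≤ wA f c x := wA_nonneg f c
  have hwint : Integrable (wA f c) μ := wA_integrable hT hi c
  have hwI : 0 ≤ ∫ x, wA f c x ∂μ := integral_nonneg hw0
  have step : ∀ N, 1 ≤ N → ∀ L : ℕ, 1 ≤ L →
      b * L ≤ c * L + L * (∫ x, uA f c N x ∂μ) + N * (∫ x, wA f c x ∂μ) := by
    intro N hN L hL
    have hae : ∀ᵐ ω ∂μ, f L ω ≤ c * L + (∑ k ∈ Finset.range L, uA f c N (T^[k] ω))
        + ∑ k ∈ Finset.range L, (if L ≤ k + N then wA f c (T^[k] ω) else 0) := by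
      filter_upwards [ae_good hT hSub] with ω hω using steele_claim T f c N hN L hL ω hω
    have hui : Integrable (fun ω => ∑ k ∈ Finset.range L, uA f c N (T^[k] ω)) μ :=
      integrable_finset_sum _ fun k _ =>
        KingmanAux.integrable_comp_iterate hT (uA_integrable hT hm hi c N) k
    have hwi2 : Integrable
        (fun ω => ∑ k ∈ Finset.range L, (if L ≤ k + N then wA f c (T^[k] ω) else 0)) μ := by
      refine integrable_finset_sum _ fun k _ => ?_
      by_cases h : L ≤ k + N
      · simp only [if_pos h]
        exact KingmanAux.integrable_comp_iterate hT hwint k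
      · simp only [if_neg h]
        exact integrable_zero Ω ℝ μ
    have hRHS : Integrable (fun ω => c * L + (∑ k ∈ Finset.range L, uA f c N (T^[k] ω))
        + ∑ k ∈ Finset.range L, (if L ≤ k + N then wA f c (T^[k] ω) else 0)) μ :=
      ((integrable_const _).add hui).add hwi2
    have hint := integral_mono_ae (hi L) hRHS hae
    have hsplit : ∫ ω, (c * L + (∑ k ∈ Finset.range L, uA f c N (T^[k] ω))
        + ∑ k ∈ Finset.range L, (if L ≤ k + N then wA f c (T^[k] ω) else 0)) ∂μ
        = c * L + (∫ ω, ∑ k ∈ Finset.range L, uA f c N (T^[k] ω) ∂μ)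
          + ∫ ω, ∑ k ∈ Finset.range L, (if L ≤ k + N then wA f c (T^[k] ω) else 0) ∂μ := by
      have h1 : Integrable
          (fun ω => c * (L:ℝ) + ∑ k ∈ Finset.range L, uA f c N (T^[k] ω)) μ :=
        (integrable_const _).add hui
      rw [integral_add h1 hwi2, integral_add (integrable_const (c * (L:ℝ))) hui, integral_const]
      simp [measure_univ]
    have huval : (∫ ω, ∑ k ∈ Finset.range L, uA f c N (T^[k] ω) ∂μ)
        = L * ∫ x, uA f c N x ∂μ := by
      rw [integral_finset_sum _ fun k _ =>
        KingmanAux.integrable_comp_iterate hT (uA_integrable hT hm hi c N) k]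
      have : ∀ k ∈ Finset.range L, (∫ ω, uA f c N (T^[k] ω) ∂μ) = ∫ x, uA f c N x ∂μ :=
        fun k _ => KingmanAux.integral_comp_iterate hT
          (uA_integrable hT hm hi c N).aestronglyMeasurable k
      rw [Finset.sum_congr rfl this, Finset.sum_const, Finset.card_range, nsmul_eq_mul]
    have hwval : (∫ ω, ∑ k ∈ Finset.range L, (if L ≤ k + N then wA f c (T^[k] ω) else 0) ∂μ)
        ≤ N * ∫ x, wA f c x ∂μ := by
      rw [integral_finset_sum _ fun k _ => ?_]
      · have heach : ∀ k ∈ Finset.range L, (∫ ω, (if L ≤ k + N then wA f c (T^[k] ω) else 0) ∂μ)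
            = if L ≤ k + N then ∫ x, wA f c x ∂μ else 0 := by
          intro k _
          by_cases h : L ≤ k + N
          · simp only [if_pos h]
            exact KingmanAux.integral_comp_iterate hT hwint.aestronglyMeasurable k
          · simp only [if_neg h, integral_zero]
        rw [Finset.sum_congr rfl heach, ← Finset.sum_filter, Finset.sum_const, nsmul_eq_mul]
        have hcard : (Finset.filter (fun k => L ≤ k + N) (Finset.range L)).card ≤ N := by
          have hsub : (Finset.filter (fun k => L ≤ k + N) (Finset.range L))
              ⊆ Finset.Ico (L - N) L := by
            intro k hk
            simp only [Finset.mem_filter, Finset.mem_range] at hk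
            simp only [Finset.mem_Ico]
            omega
          have := Finset.card_le_card hsub
          rw [Nat.card_Ico] at this
          omega
        have hcard' : ((Finset.filter (fun k => L ≤ k + N) (Finset.range L)).card : ℝ) ≤ (N:ℝ) :=
          by exact_mod_cast hcard
        exact mul_le_mul_of_nonneg_right hcard' hwI
      · by_cases h : L ≤ k + N
        · simp only [if_pos h]
          exact KingmanAux.integrable_comp_iterate hT hwint k
        · simp only [if_neg h]
          exact integrable_zero Ω ℝ μ
    have hbL := hb L hL
    rw [hsplit, huval] at hint
    linarith
  have step2 : ∀ N, 1 ≤ N → b ≤ c + ∫ x, uA f c N x ∂μ := by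
    intro N hN
    have hdiv : ∀ L : ℕ, 1 ≤ L → b ≤ c + (∫ x, uA f c N x ∂μ)
        + (N * ∫ x, wA f c x ∂μ) / L := by
      intro L hL
      have hLpos : (0:ℝ) < L := by exact_mod_cast hL
      rw [← mul_le_mul_iff_of_pos_right hLpos]
      have h2 : (c + (∫ x, uA f c N x ∂μ) + (N * ∫ x, wA f c x ∂μ) / L) * L
          = c * L + L * (∫ x, uA f c N x ∂μ) + N * (∫ x, wA f c x ∂μ) := by
        field_simp
      rw [h2]
      exact step N hN L hL
    have htend : Tendsto (fun L : ℕ => c + (∫ x, uA f c N x ∂μ)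
        + (N * ∫ x, wA f c x ∂μ) / L) atTop
        (nhds (c + (∫ x, uA f c N x ∂μ) + 0)) :=
      (tendsto_const_nhds.add tendsto_const_nhds).add
        (tendsto_const_div_atTop_nhds_zero_nat _)
    have : b ≤ c + (∫ x, uA f c N x ∂μ) + 0 :=
      ge_of_tendsto htend (eventually_atTop.mpr ⟨1, fun L hL => hdiv L hL⟩)
    linarith
  have huN : Tendsto (fun N : ℕ => ∫ x, uA f c N x ∂μ) atTop (nhds 0) := by
    have h0 : (0:ℝ) = ∫ _ : Ω, (0:ℝ) ∂μ := by simp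
    rw [h0]
    refine tendsto_integral_of_dominated_convergence (wA f c)
      (fun N => (uA_measurable hm c N).aestronglyMeasurable) hwint
      (fun N => Eventually.of_forall fun x => ?_) ?_
    · rw [Real.norm_eq_abs, abs_of_nonneg (uA_nonneg f c N x)]
      exact uA_le_wA f c N x
    · filter_upwards [hcov] with x hx
      obtain ⟨n, hn1, hnval⟩ := hx
      refine tendsto_nhds_of_eventually_eq (eventually_atTop.mpr ⟨n, fun N hN => ?_⟩)
      unfold uA
      rw [if_pos ⟨n, hn1, hN, hnval⟩]
  have : b ≤ c + 0 :=
    ge_of_tendsto (tendsto_const_nhds.add huN) (eventually_atTop.mpr ⟨1, fun N hN => step2 N hN⟩)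
  linarith

end KingmanAux4


open Filter MeasureTheory Set

namespace KingmanAux4

open KingmanAux3

variable {Ω : Type*} [MeasurableSpace Ω] {μ : Measure Ω} {T : Ω → Ω}

lemma chain_blocks {f : ℕ → Ω → ℝ} (m : ℕ) :
    ∀ q b (ω : Ω), Good T f ω → f (q * m + b) ω ≤
      (∑ t ∈ Finset.range q, f m (T^[t * m] ω)) + f b (T^[q * m] ω) := by
  intro q
  induction q with
  | zero => intro b ω _; simp
  | succ q ih =>
    intro b ω h
    have key : (q + 1) * m + b = (q * m + b) + m := by ring
    have h1 : f ((q * m + b) + m) ω ≤ f (q * m + b) (T^[m] ω) + f m ω := h.sub (q * m + b) m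
    have h2 := ih b (T^[m] ω) (h.shift m)
    have e1 : ∑ t ∈ Finset.range q, f m (T^[t * m] (T^[m] ω))
        = ∑ t ∈ Finset.range q, f m (T^[(t + 1) * m] ω) := by
      refine Finset.sum_congr rfl fun t _ => ?_
      rw [← Function.iterate_add_apply]
      congr 1
      ring
    have e2 : f b (T^[q * m] (T^[m] ω)) = f b (T^[(q + 1) * m] ω) := by
      rw [← Function.iterate_add_apply]
      congr 1
      ring
    rw [e1, e2] at h2
    rw [key, Finset.sum_range_succ']
    simp only [Nat.zero_mul, Function.iterate_zero_apply]
    calc f (q * m + b + m) ω ≤ f (q * m + b) (T^[m] ω) + f m ω := h1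
      _ ≤ (∑ t ∈ Finset.range q, f m (T^[(t + 1) * m] ω)) + f b (T^[(q + 1) * m] ω) + f m ω := by
          linarith
      _ = (∑ t ∈ Finset.range q, f m (T^[(t + 1) * m] ω)) + f m ω + f b (T^[(q + 1) * m] ω) := by
          ring

lemma phase_eq {m i i' t t' : ℕ} (hi : 1 ≤ i) (him : i ≤ m) (hi' : 1 ≤ i') (him' : i' ≤ m)
    (h : t * m + i = t' * m + i') : i = i' ∧ t = t' := by
  rcases lt_trichotomy t t' with hlt | heq | hgt
  · exfalso
    have h5 : (t + 1) * m ≤ t' * m := Nat.mul_le_mul_right m hlt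
    have h6 : (t + 1) * m = t * m + m := by ring
    have h7 : t * m + m ≤ t' * m := by omega
    omega
  · subst heq
    omega
  · exfalso
    have h5 : (t' + 1) * m ≤ t * m := Nat.mul_le_mul_right m hgt
    have h6 : (t' + 1) * m = t' * m + m := by ring
    omega

lemma phase_decomp {m i n : ℕ} (hm : 1 ≤ m) (hi : 1 ≤ i) (hn : i + 2 * m ≤ n) :
    n = i + ((n - i - m) / m) * m + (n - i - ((n - i - m) / m) * m)
      ∧ m ≤ n - i - ((n - i - m) / m) * m
      ∧ (n - i - ((n - i - m) / m) * m) < 2 * m := by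
  have hm0 : 0 < m := hm
  set s := n - i - m with hs
  set q := s / m with hq
  have h1 : q * m ≤ s := Nat.div_mul_le_self s m
  have h3 : m * q + s % m = s := Nat.div_add_mod s m
  have h2 : s % m < m := Nat.mod_lt _ hm0
  have h4 : m * q = q * m := mul_comm _ _
  rw [h4] at h3
  omega

lemma phase_ineq {f : ℕ → Ω → ℝ} {ω : Ω} (hG : Good T f ω) {m i n q r : ℕ}
    (heq : n = i + q * m + r) :
    f n ω ≤ f i ω + (∑ t ∈ Finset.range q, f m (T^[t * m + i] ω)) + f r (T^[q * m + i] ω) := by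
  have h1 : f ((q * m + r) + i) ω ≤ f (q * m + r) (T^[i] ω) + f i ω := hG.sub (q * m + r) i
  have h2 := chain_blocks m q r (T^[i] ω) (hG.shift i)
  have e1 : ∑ t ∈ Finset.range q, f m (T^[t * m] (T^[i] ω))
      = ∑ t ∈ Finset.range q, f m (T^[t * m + i] ω) := by
    refine Finset.sum_congr rfl fun t _ => ?_
    rw [← Function.iterate_add_apply]
  have e2 : f r (T^[q * m] (T^[i] ω)) = f r (T^[q * m + i] ω) := by
    rw [← Function.iterate_add_apply]
  rw [e1, e2] at h2
  have hn : n = (q * m + r) + i := by rw [heq]; ring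
  rw [hn]
  linarith

end KingmanAux4


open Filter MeasureTheory Set

namespace KingmanAux4

open KingmanAux3

variable {Ω : Type*} [MeasurableSpace Ω] {μ : Measure Ω} {T : Ω → Ω}

/-- Upper bound half of Kingman: eventually `f n ω < c n` a.s., for any `c`
with `∫ f m < c * m` for some `m ≥ 1`. -/
lemma upper_bound [IsProbabilityMeasure μ] (hErg : Ergodic T μ) {f : ℕ → Ω → ℝ}
    (hmeas : ∀ n, Measurable (f n)) (hint : ∀ n, Integrable (f n) μ)
    (hSub : ∀ m n : ℕ, ∀ᵐ ω ∂μ, f (m + n) ω ≤ f m (T^[n] ω) + f n ω)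
    {m : ℕ} (hm1 : 1 ≤ m) {c : ℝ} (hc : ∫ ω, f m ω ∂μ < c * m) :
    ∀ᵐ ω ∂μ, ∀ᶠ n in atTop, f n ω < c * n := by
  have hT : MeasurePreserving T μ μ := hErg.toMeasurePreserving
  have hm0R : (0:ℝ) < m := by exact_mod_cast hm1
  set I : ℝ := ∫ ω, f m ω ∂μ with hI
  set η : ℝ := (c * m - I) / 4 with hη
  have hηpos : 0 < η := by rw [hη]; linarith
  set a : ℝ := I + η with ha
  -- auxiliary functions
  set Fb : Ω → ℝ := fun x => ∑ r ∈ Finset.Ico m (2 * m), max (f r x) 0 with hFb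
  set negm : Ω → ℝ := fun x => max (- f m x) 0 with hnegm
  set Gb : Ω → ℝ := fun x => negm x + (m : ℝ) * Fb x with hGb
  have hFb0 : ∀ x, 0 ≤ Fb x := fun x => Finset.sum_nonneg fun r _ => le_max_right _ _
  have hnegm0 : ∀ x, 0 ≤ negm x := fun x => le_max_right _ _
  have hGb0 : ∀ x, 0 ≤ Gb x := fun x =>
    add_nonneg (hnegm0 x) (mul_nonneg (le_of_lt hm0R) (hFb0 x))
  have hGbm : Measurable Gb := by
    refine Measurable.add ?_ (measurable_const.mul ?_)
    · exact ((hmeas m).neg.max measurable_const)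
    · exact Finset.measurable_sum _ fun r _ => (hmeas r).max measurable_const
  have hGbi : Integrable Gb μ := by
    refine Integrable.add ?_ (Integrable.const_mul ?_ _)
    · exact (hint m).neg.sup (integrable_const 0)
    · exact integrable_finset_sum _ fun r _ => (hint r).sup (integrable_const 0)
  -- a.e. facts
  have H1 : ∀ᵐ ω ∂μ, ∀ᶠ k in atTop, bS T (f m) k ω < a * k :=
    half_birkhoff hErg (hmeas m) (hint m) (by rw [ha, ← hI]; linarith)
  have H2 : ∀ᵐ ω ∂μ, Tendsto (fun j : ℕ => Gb (T^[j] ω) / j) atTop (nhds 0) :=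
    KingmanAux2.ae_tendsto_comp_iterate_div hT hGbm hGbi hGb0
  have H3 : ∀ᵐ ω ∂μ, Good T f ω := ae_good hT hSub
  filter_upwards [H1, H2, H3] with ω h1 h2 h3
  -- window bound
  have hW : ∀ᶠ n in atTop, (∑ j ∈ Finset.Ioc (n - 3 * m) n, Gb (T^[j] ω)) ≤ η * n :=
    KingmanAux2.window_sum (fun j => hGb0 _) h2 (3 * m) hηpos
  -- Birkhoff sums bound at shifted index
  obtain ⟨K₀, hK₀⟩ := eventually_atTop.1 h1
  have hS : ∀ᶠ n in atTop, bS T (f m) (n - 2 * m + 1) ω < a * ((n:ℝ) - 2 * m + 1) := by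
    filter_upwards [eventually_ge_atTop (K₀ + 3 * m + 1)] with n hn
    have h2mn : 2 * m ≤ n := by omega
    have := hK₀ (n - 2 * m + 1) (by omega)
    have hcast : ((n - 2 * m + 1 : ℕ) : ℝ) = (n : ℝ) - 2 * m + 1 := by
      push_cast [Nat.cast_sub h2mn]
      ring
    rwa [hcast] at this
  -- the constant part
  set S1 : ℝ := ∑ i ∈ Finset.Icc 1 m, f i ω with hS1
  have hD : ∀ᶠ n : ℕ in atTop, S1 - f m ω + a * (1 - 2 * (m:ℝ)) < 2 * (η * n) := by
    have htend : Tendsto (fun n : ℕ => 2 * (η * (n:ℝ))) atTop atTop := by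
      refine Tendsto.const_mul_atTop (by linarith) ?_
      exact Tendsto.const_mul_atTop hηpos tendsto_natCast_atTop_atTop
    exact htend.eventually_gt_atTop _
  -- main pointwise estimate
  have claim : ∀ n : ℕ, 3 * m + 1 ≤ n →
      (m:ℝ) * f n ω ≤ S1 + (bS T (f m) (n - 2 * m + 1) ω - f m ω)
        + ∑ j ∈ Finset.Ioc (n - 3 * m) n, Gb (T^[j] ω) := by
    intro n hn
    set qf : ℕ → ℕ := fun i => (n - i - m) / m with hqfdef
    set rf : ℕ → ℕ := fun i => n - i - qf i * m with hrfdef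
    have hfacts : ∀ i, 1 ≤ i → i ≤ m →
        n = i + qf i * m + rf i ∧ m ≤ rf i ∧ rf i < 2 * m := by
      intro i h1i h2i
      exact phase_decomp hm1 h1i (by omega)
    -- the per-phase inequality
    have hphase : ∀ i ∈ Finset.Icc 1 m, f n ω ≤ f i ω
        + (∑ t ∈ Finset.range (qf i), f m (T^[t * m + i] ω))
        + f (rf i) (T^[qf i * m + i] ω) := by
      intro i hi
      rw [Finset.mem_Icc] at hi
      exact phase_ineq h3 (hfacts i hi.1 hi.2).1
    -- summing over phases
    have hcardIcc : (Finset.Icc 1 m).card = m := by rw [Nat.card_Icc]; omega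
    have hsum0 : (m:ℝ) * f n ω = ∑ _i ∈ Finset.Icc 1 m, f n ω := by
      rw [Finset.sum_const, hcardIcc, nsmul_eq_mul]
    have hsum1 : (m:ℝ) * f n ω ≤ (∑ i ∈ Finset.Icc 1 m, f i ω)
        + (∑ i ∈ Finset.Icc 1 m, ∑ t ∈ Finset.range (qf i), f m (T^[t * m + i] ω))
        + ∑ i ∈ Finset.Icc 1 m, f (rf i) (T^[qf i * m + i] ω) := by
      rw [hsum0, ← Finset.sum_add_distrib, ← Finset.sum_add_distrib]
      exact Finset.sum_le_sum hphase
    -- the union of index sets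
    set J : Finset ℕ := (Finset.Icc 1 m).biUnion
      (fun i => (Finset.range (qf i)).image (fun t => t * m + i)) with hJ
    have hS2 : (∑ i ∈ Finset.Icc 1 m, ∑ t ∈ Finset.range (qf i), f m (T^[t * m + i] ω))
        = ∑ j ∈ J, f m (T^[j] ω) := by
      rw [hJ, Finset.sum_biUnion ?disj]
      case disj =>
        intro i hi i' hi' hne
        simp only [Finset.coe_Icc, Set.mem_Icc] at hi hi'
        simp only [Function.onFun]
        rw [Finset.disjoint_left]
        intro x hx hx'
        simp only [Finset.mem_image, Finset.mem_range] at hx hx'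
        obtain ⟨t, _, ht⟩ := hx
        obtain ⟨t', _, ht'⟩ := hx'
        exact hne (phase_eq hi.1 hi.2 hi'.1 hi'.2 (ht.trans ht'.symm)).1
      refine Finset.sum_congr rfl fun i _ => ?_
      rw [Finset.sum_image]
      intro t _ t' _ h
      have : t * m = t' * m := by simp only at h; omega
      exact Nat.eq_of_mul_eq_mul_right (by omega) this
    have hJsub : J ⊆ Finset.Icc 1 (n - 2 * m) := by
      intro j hj
      rw [hJ, Finset.mem_biUnion] at hj
      obtain ⟨i, hiIcc, hjmem⟩ := hj
      rw [Finset.mem_Icc] at hiIcc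
      rw [Finset.mem_image] at hjmem
      obtain ⟨t, ht, rfl⟩ := hjmem
      rw [Finset.mem_range] at ht
      obtain ⟨heq, hr1, hr2⟩ := hfacts i hiIcc.1 hiIcc.2
      have hmul : (t + 1) * m ≤ qf i * m := Nat.mul_le_mul_right m ht
      have hmul' : (t + 1) * m = t * m + m := by ring
      rw [Finset.mem_Icc]
      omega
    have hJco : Finset.Icc 1 (n - 2 * m) \ J ⊆ Finset.Ioc (n - 3 * m) (n - 2 * m) := by
      intro j hj
      rw [Finset.mem_sdiff] at hj
      obtain ⟨hjIcc, hjnot⟩ := hj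
      rw [Finset.mem_Icc] at hjIcc
      rw [Finset.mem_Ioc]
      refine ⟨?_, hjIcc.2⟩
      by_contra hcon
      push_neg at hcon
      -- j ≤ n - 3m, so j belongs to J
      apply hjnot
      set i : ℕ := (j - 1) % m + 1 with hidef
      set t : ℕ := (j - 1) / m with htdef
      have hdm : t * m + (j - 1) % m = j - 1 := by
        rw [htdef, mul_comm]
        exact Nat.div_add_mod (j - 1) m
      have hmod : (j - 1) % m < m := Nat.mod_lt _ (by omega)
      have hi1 : 1 ≤ i := by omega
      have him : i ≤ m := by omega
      have hji : j = t * m + i := by omega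
      obtain ⟨heq, hr1, hr2⟩ := hfacts i hi1 him
      have htlt : t < qf i := by
        have h5 : t * m < qf i * m := by omega
        exact lt_of_mul_lt_mul_right h5 (Nat.zero_le m)
      rw [hJ, Finset.mem_biUnion]
      exact ⟨i, Finset.mem_Icc.2 ⟨hi1, him⟩,
        Finset.mem_image.2 ⟨t, Finset.mem_range.2 htlt, hji.symm⟩⟩
    -- control of the main block sum
    have hsd := Finset.sum_sdiff (f := fun j => f m (T^[j] ω)) hJsub
    have hnegle : ∀ j, - f m (T^[j] ω) ≤ negm (T^[j] ω) := fun j => le_max_left _ _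
    have hS2bound : (∑ j ∈ J, f m (T^[j] ω))
        ≤ (∑ j ∈ Finset.Icc 1 (n - 2 * m), f m (T^[j] ω))
          + ∑ j ∈ Finset.Ioc (n - 3 * m) (n - 2 * m), negm (T^[j] ω) := by
      have h6 : - (∑ j ∈ Finset.Icc 1 (n - 2 * m) \ J, f m (T^[j] ω))
          ≤ ∑ j ∈ Finset.Icc 1 (n - 2 * m) \ J, negm (T^[j] ω) := by
        rw [← Finset.sum_neg_distrib]
        exact Finset.sum_le_sum fun j _ => hnegle j
      have h7 : (∑ j ∈ Finset.Icc 1 (n - 2 * m) \ J, negm (T^[j] ω))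
          ≤ ∑ j ∈ Finset.Ioc (n - 3 * m) (n - 2 * m), negm (T^[j] ω) :=
        Finset.sum_le_sum_of_subset_of_nonneg hJco fun j _ _ => hnegm0 _
      linarith
    -- identify the full sum with a Birkhoff sum
    have hbSid : (∑ j ∈ Finset.Icc 1 (n - 2 * m), f m (T^[j] ω))
        = bS T (f m) (n - 2 * m + 1) ω - f m ω := by
      have hins : Finset.range (n - 2 * m + 1) = insert 0 (Finset.Icc 1 (n - 2 * m)) := by
        ext j
        simp only [Finset.mem_range, Finset.mem_insert, Finset.mem_Icc]
        omega
      have : bS T (f m) (n - 2 * m + 1) ω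
          = f m ω + ∑ j ∈ Finset.Icc 1 (n - 2 * m), f m (T^[j] ω) := by
        rw [bS, hins, Finset.sum_insert (by simp)]
        simp only [Function.iterate_zero_apply]
      linarith
    -- endpoint sums
    have hS3 : (∑ i ∈ Finset.Icc 1 m, f (rf i) (T^[qf i * m + i] ω))
        ≤ (m:ℝ) * ∑ j ∈ Finset.Ioc (n - 2 * m) (n - m), Fb (T^[j] ω) := by
      have hterm : ∀ i ∈ Finset.Icc 1 m, f (rf i) (T^[qf i * m + i] ω)
          ≤ ∑ j ∈ Finset.Ioc (n - 2 * m) (n - m), Fb (T^[j] ω) := by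
        intro i hi
        rw [Finset.mem_Icc] at hi
        obtain ⟨heq, hr1, hr2⟩ := hfacts i hi.1 hi.2
        have step1 : f (rf i) (T^[qf i * m + i] ω) ≤ Fb (T^[qf i * m + i] ω) := by
          refine le_trans (le_max_left _ 0) ?_
          rw [hFb]
          exact Finset.single_le_sum
            (fun r _ => le_max_right (f r (T^[qf i * m + i] ω)) 0)
            (Finset.mem_Ico.2 ⟨hr1, hr2⟩)
        refine step1.trans ?_
        have hj1 : n - 2 * m < qf i * m + i := by omega
        have hj2 : qf i * m + i ≤ n - m := by omega
        exact Finset.single_le_sum (f := fun j => Fb (T^[j] ω)) (fun j _ => hFb0 _)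
          (Finset.mem_Ioc.2 ⟨hj1, hj2⟩)
      calc (∑ i ∈ Finset.Icc 1 m, f (rf i) (T^[qf i * m + i] ω))
          ≤ ∑ _i ∈ Finset.Icc 1 m, ∑ j ∈ Finset.Ioc (n - 2 * m) (n - m), Fb (T^[j] ω) :=
            Finset.sum_le_sum hterm
        _ = (m:ℝ) * ∑ j ∈ Finset.Ioc (n - 2 * m) (n - m), Fb (T^[j] ω) := by
            rw [Finset.sum_const, hcardIcc, nsmul_eq_mul]
    -- combine the two windows into the big one
    have hwin : (∑ j ∈ Finset.Ioc (n - 3 * m) (n - 2 * m), negm (T^[j] ω))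
        + (m:ℝ) * (∑ j ∈ Finset.Ioc (n - 2 * m) (n - m), Fb (T^[j] ω))
        ≤ ∑ j ∈ Finset.Ioc (n - 3 * m) n, Gb (T^[j] ω) := by
      have hw1 : (∑ j ∈ Finset.Ioc (n - 3 * m) (n - 2 * m), negm (T^[j] ω))
          ≤ ∑ j ∈ Finset.Ioc (n - 3 * m) n, negm (T^[j] ω) :=
        Finset.sum_le_sum_of_subset_of_nonneg
          (Finset.Ioc_subset_Ioc (le_refl _) (by omega)) (fun j _ _ => hnegm0 _)
      have hw2 : (m:ℝ) * (∑ j ∈ Finset.Ioc (n - 2 * m) (n - m), Fb (T^[j] ω))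
          ≤ (m:ℝ) * ∑ j ∈ Finset.Ioc (n - 3 * m) n, Fb (T^[j] ω) := by
        refine mul_le_mul_of_nonneg_left ?_ (le_of_lt hm0R)
        exact Finset.sum_le_sum_of_subset_of_nonneg
          (Finset.Ioc_subset_Ioc (by omega) (by omega)) (fun j _ _ => hFb0 _)
      have hw3 : (∑ j ∈ Finset.Ioc (n - 3 * m) n, negm (T^[j] ω))
          + (m:ℝ) * (∑ j ∈ Finset.Ioc (n - 3 * m) n, Fb (T^[j] ω))
          = ∑ j ∈ Finset.Ioc (n - 3 * m) n, Gb (T^[j] ω) := by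
        rw [Finset.mul_sum, ← Finset.sum_add_distrib]
      linarith
    rw [hS2] at hsum1
    linarith
  -- final assembly
  have hce : c * (m:ℝ) = a + 3 * η := by rw [ha, hη]; ring
  filter_upwards [hW, hS, hD, eventually_ge_atTop (3 * m + 1)] with n hWn hSn hDn hn
  have hclaim := claim n hn
  have hexp : a * ((n:ℝ) - 2 * m + 1) = a * n + a * (1 - 2 * (m:ℝ)) := by ring
  rw [hexp] at hSn
  have hmf : (m:ℝ) * f n ω < (m:ℝ) * (c * n) := by
    have hgoal : (m:ℝ) * (c * n) = a * n + 3 * (η * n) := by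
      have : (m:ℝ) * (c * n) = (c * m) * n := by ring
      rw [this, hce]; ring
    rw [hgoal]
    linarith
  exact lt_of_mul_lt_mul_left hmf (le_of_lt hm0R)

end KingmanAux4


open Filter MeasureTheory Set

namespace KingmanAux4

open KingmanAux3

variable {Ω : Type*} [MeasurableSpace Ω] {μ : Measure Ω} {T : Ω → Ω}

/-- Lower bound half of Kingman, via Steele's covering argument and ergodicity. -/
lemma lower_bound [IsProbabilityMeasure μ] (hErg : Ergodic T μ) {f : ℕ → Ω → ℝ}
    (hmeas : ∀ n, Measurable (f n)) (hint : ∀ n, Integrable (f n) μ)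
    (hSub : ∀ m n : ℕ, ∀ᵐ ω ∂μ, f (m + n) ω ≤ f m (T^[n] ω) + f n ω)
    {b : ℝ} (hb : ∀ L : ℕ, 1 ≤ L → b * L ≤ ∫ ω, f L ω ∂μ)
    {ε : ℝ} (hε : 0 < ε) :
    ∀ᵐ ω ∂μ, ∀ᶠ n in atTop, (b - ε) * n < f n ω := by
  have hT : MeasurePreserving T μ μ := hErg.toMeasurePreserving
  obtain ⟨q, hq1, hq2⟩ := exists_rat_btwn (show b - ε < b by linarith)
  set V : Set Ω := {ω | ∀ q' : ℚ, q < q' → ∃ᶠ n : ℕ in atTop, f n ω < (q' : ℝ) * n} with hV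
  have hVmeas : MeasurableSet V := by
    have : V = ⋂ (q' : ℚ), ⋂ (_ : q < q'), ⋂ (N : ℕ), ⋃ (n : ℕ), ⋃ (_ : N ≤ n),
        {ω | f n ω < (q' : ℝ) * n} := by
      ext ω
      simp only [hV, mem_setOf_eq, mem_iInter, mem_iUnion, frequently_atTop, mem_setOf_eq]
      constructor
      · intro h q' hq' N; obtain ⟨n, hn, h'⟩ := h q' hq' N; exact ⟨n, hn, h'⟩
      · intro h q' hq' N; obtain ⟨n, hn, h'⟩ := h q' hq' N; exact ⟨n, hn, h'⟩
    rw [this]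
    exact MeasurableSet.iInter fun q' => MeasurableSet.iInter fun _ =>
      MeasurableSet.iInter fun N => MeasurableSet.iUnion fun n => MeasurableSet.iUnion fun _ =>
        measurableSet_lt (hmeas n) measurable_const
  have hsub1 : ∀ᵐ ω ∂μ, ∀ n : ℕ, f (n + 1) ω ≤ f n (T ω) + f 1 ω := by
    rw [ae_all_iff]
    intro n
    filter_upwards [hSub n 1] with ω h
    simpa [Function.iterate_one] using h
  have hVinv : T ⁻¹' V ≤ᵐ[μ] V := by
    filter_upwards [hsub1] with ω hω hmem
    intro q'' hq''
    obtain ⟨q', hq'a, hq'b⟩ := exists_between hq''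
    have hfreq := hmem q' hq'a
    rw [frequently_atTop] at hfreq ⊢
    intro N
    obtain ⟨N₀, hN₀⟩ := exists_nat_ge ((f 1 ω - q') / ((q'' : ℝ) - q'))
    obtain ⟨n, hn, hlt⟩ := hfreq (max N (N₀ + 1))
    refine ⟨n + 1, by omega, ?_⟩
    have hstep := hω n
    have hnN₀ : (N₀ : ℝ) ≤ n := by exact_mod_cast (by omega : N₀ ≤ n)
    have hqq : (0:ℝ) < (q'' : ℝ) - q' := by
      have : (q' : ℝ) < (q'' : ℝ) := by exact_mod_cast hq'b
      linarith
    have hbig : f 1 ω - q' ≤ ((q'' : ℝ) - q') * n := by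
      rw [div_le_iff₀ hqq] at hN₀
      nlinarith
    have hq'q'' : (q' : ℝ) ≤ (q'' : ℝ) := by
      have : (q' : ℝ) < (q'' : ℝ) := by exact_mod_cast hq'b
      linarith
    push_cast
    -- goal : f (n+1) ω < q'' * (n + 1)
    calc f (n + 1) ω ≤ f n (T ω) + f 1 ω := hstep
      _ < (q' : ℝ) * n + f 1 ω := by linarith
      _ ≤ (q'' : ℝ) * ((n : ℝ) + 1) := by nlinarith
  rcases hErg.ae_empty_or_univ_of_preimage_ae_le' hVmeas.nullMeasurableSet hVinv
      (measure_ne_top μ V) with hE | hE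
  · -- V is null : conclusion holds a.e.
    have hnull : μ V = 0 := ae_eq_empty.mp hE
    filter_upwards [(measure_eq_zero_iff_ae_notMem).mp hnull] with ω hω
    simp only [hV, mem_setOf_eq, not_forall] at hω
    obtain ⟨q', hq', hnot⟩ := hω
    rw [not_frequently] at hnot
    simp only [not_lt] at hnot
    filter_upwards [hnot, eventually_ge_atTop 1] with n h1 h2
    have hn : (0 : ℝ) < n := by exact_mod_cast h2
    have hbq : b - ε < (q' : ℝ) := by
      have : (q : ℝ) < (q' : ℝ) := by exact_mod_cast hq'
      linarith
    calc (b - ε) * n < (q' : ℝ) * n := by nlinarith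
      _ ≤ f n ω := h1
  · exfalso
    obtain ⟨q', hq'1, hq'2⟩ := exists_rat_btwn hq2
    have hVfull : ∀ᵐ ω ∂μ, ω ∈ V := by
      filter_upwards [eventuallyEq_set.mp hE] with ω hω using hω.mpr (mem_univ ω)
    have hcov : ∀ᵐ ω ∂μ, ∃ n, 1 ≤ n ∧ f n ω ≤ (q' : ℝ) * n := by
      filter_upwards [hVfull] with ω hω
      have := hω q' (by exact_mod_cast hq'1)
      rw [frequently_atTop] at this
      obtain ⟨n, hn1, hlt⟩ := this 1
      exact ⟨n, hn1, le_of_lt hlt⟩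
    have hle : b ≤ (q' : ℝ) := steele_bound hT hmeas hint hSub hcov hb
    linarith

end KingmanAux4

end KingmanAuxiliary

/-- Kingman's subadditive ergodic theorem (ergodic case): for a subadditive
sequence of integrable random variables over an ergodic measure-preserving
system, with inf_n (1/n)𝔼[Yₙ] > -∞, the quotients Yₙ/n converge almost surely
to the constant β = inf_{n≥1} (1/n)𝔼[Yₙ]. -/
theorem kingman_subadditive_ergodic {Ω : Type*} [MeasurableSpace Ω]
    (ℙ : Measure Ω) [IsProbabilityMeasure ℙ]
    (θ : Ω → Ω) (hθ : MeasurePreserving θ ℙ ℙ) (hErg : Ergodic θ ℙ)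
    (Y : ℕ → Ω → ℝ) (hInt : ∀ n, Integrable (Y n) ℙ)
    (hSub : ∀ m n : ℕ, ∀ᵐ ω ∂ℙ, Y (m + n) ω ≤ Y m (θ^[n] ω) + Y n ω)
    (hBdd : ∃ C : ℝ, ∀ n : ℕ+, C ≤ (∫ ω, Y n ω ∂ℙ) / (n : ℝ)) :
    ∀ᵐ ω ∂ℙ, Tendsto (fun n : ℕ => Y n ω / (n : ℝ)) atTop
      (nhds (⨅ n : ℕ+, (∫ ω, Y n ω ∂ℙ) / (n : ℝ))) := by
  set β : ℝ := ⨅ n : ℕ+, (∫ ω, Y n ω ∂ℙ) / (n : ℝ) with hβ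
  -- measurable modification of Y
  set f : ℕ → Ω → ℝ := fun n => (hInt n).1.mk (Y n) with hf
  have hfae : ∀ n, Y n =ᵐ[ℙ] f n := fun n => (hInt n).1.ae_eq_mk
  have hfm : ∀ n, Measurable (f n) := fun n =>
    (hInt n).1.stronglyMeasurable_mk.measurable
  have hfi : ∀ n, Integrable (f n) ℙ := fun n => (hInt n).congr (hfae n)
  have hfint : ∀ n, (∫ ω, f n ω ∂ℙ) = ∫ ω, Y n ω ∂ℙ :=
    fun n => integral_congr_ae (hfae n).symm
  have hfSub : ∀ m n : ℕ, ∀ᵐ ω ∂ℙ, f (m + n) ω ≤ f m (θ^[n] ω) + f n ω := by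
    intro m n
    have hcomp : ∀ᵐ ω ∂ℙ, Y m (θ^[n] ω) = f m (θ^[n] ω) :=
      ((hθ.iterate n).quasiMeasurePreserving.tendsto_ae).eventually (hfae m)
    filter_upwards [hSub m n, hfae (m + n), hfae n, hcomp] with ω h1 h2 h3 h4
    rw [← h2, ← h3, ← h4]
    exact h1
  -- basic facts about β
  obtain ⟨C, hC⟩ := hBdd
  have hbdd : BddBelow (Set.range fun n : ℕ+ => (∫ ω, Y n ω ∂ℙ) / (n : ℝ)) := by
    refine ⟨C, ?_⟩
    rintro x ⟨n, rfl⟩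
    exact hC n
  have hβle : ∀ L : ℕ, 1 ≤ L → β * L ≤ ∫ ω, f L ω ∂ℙ := by
    intro L hL
    have hLpos : 0 < L := hL
    have h1 : β ≤ (∫ ω, Y (⟨L, hLpos⟩ : ℕ+) ω ∂ℙ) / ((⟨L, hLpos⟩ : ℕ+) : ℝ) :=
      ciInf_le hbdd (⟨L, hLpos⟩ : ℕ+)
    have h2 : (((⟨L, hLpos⟩ : ℕ+) : ℕ) : ℝ) = (L : ℝ) := by norm_num
    rw [hfint L]
    have hLR : (0:ℝ) < L := by exact_mod_cast hL
    have h1' : β ≤ (∫ ω, Y L ω ∂ℙ) / (L : ℝ) := by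
      convert h1 using 2
    rw [le_div_iff₀ hLR] at h1'
    exact h1'
  -- upper bound
  have hupper : ∀ ε : ℝ, 0 < ε → ∀ᵐ ω ∂ℙ, ∀ᶠ n in atTop, f n ω < (β + ε) * n := by
    intro ε hε
    have hlt : β < β + ε := by linarith
    rw [hβ] at hlt
    obtain ⟨m, hm⟩ := exists_lt_of_ciInf_lt hlt
    have hmpos : 0 < (m : ℕ) := m.property
    have hmR : (0:ℝ) < ((m : ℕ) : ℝ) := by exact_mod_cast hmpos
    have hm' : (∫ ω, Y (m : ℕ) ω ∂ℙ) / ((m : ℕ) : ℝ) < β + ε := by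
      convert hm using 2
    rw [div_lt_iff₀ hmR] at hm'
    have hc : (∫ ω, f (m : ℕ) ω ∂ℙ) < (β + ε) * ((m : ℕ) : ℝ) := by
      rw [hfint]
      exact hm'
    exact KingmanAux4.upper_bound hErg hfm hfi hfSub hmpos hc
  -- lower bound
  have hlower : ∀ ε : ℝ, 0 < ε → ∀ᵐ ω ∂ℙ, ∀ᶠ n in atTop, (β - ε) * n < f n ω :=
    fun ε hε => KingmanAux4.lower_bound hErg hfm hfi hfSub hβle hε
  have hall : ∀ᵐ ω ∂ℙ, ∀ k : ℕ,
      (∀ᶠ n in atTop, f n ω < (β + 1 / (k + 1)) * n)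
        ∧ (∀ᶠ n in atTop, (β - 1 / (k + 1)) * n < f n ω) := by
    rw [ae_all_iff]
    intro k
    have hkpos : (0:ℝ) < 1 / (k + 1) := by positivity
    exact (hupper _ hkpos).and (hlower _ hkpos)
  have hYf : ∀ᵐ ω ∂ℙ, ∀ n, Y n ω = f n ω := ae_all_iff.2 fun n => hfae n
  filter_upwards [hall, hYf] with ω hω hYω
  rw [Metric.tendsto_atTop]
  intro ε hε
  obtain ⟨k, hk⟩ := exists_nat_one_div_lt hε
  obtain ⟨N₁, h₁⟩ := eventually_atTop.1 (hω k).1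
  obtain ⟨N₂, h₂⟩ := eventually_atTop.1 (hω k).2
  refine ⟨max (max N₁ N₂) 1, fun n hn => ?_⟩
  have hn1 : 1 ≤ n := le_trans (le_max_right _ _) hn
  have hu := h₁ n (le_trans (le_trans (le_max_left _ _) (le_max_left _ _)) hn)
  have hl := h₂ n (le_trans (le_trans (le_max_right _ _) (le_max_left _ _)) hn)
  have hnpos : (0:ℝ) < n := by exact_mod_cast hn1
  rw [Real.dist_eq, hYω n]
  have hub : f n ω / n < β + 1 / (k + 1) := by
    rw [div_lt_iff₀ hnpos]
    calc f n ω < (β + 1 / (k + 1)) * n := hu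
      _ = (β + 1 / (k + 1)) * n := rfl
  have hlb : β - 1 / (k + 1) < f n ω / n := by
    rw [lt_div_iff₀ hnpos]
    exact hl
  have habs : |f n ω / n - β| < 1 / (k + 1) := by
    rw [abs_sub_lt_iff]
    constructor <;> linarith
  linarith
end
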